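/- Let a ≤ m and let M_1, …, M_m be matchings in a bipartite graph, ordered so that |M_1| ≤ |M_2| ≤ … ≤ |M_m|. If ∑_{i=1}^{m−a+1} (|M_i| − a + 1) ≥ a (as a sum of integers), then the family M_1, …, M_m has a rainbow matching of size a. Formally: if M : Fin m → Finset (A × B), each M i is a matching (both coordinate projections injective), the sizes |M i| are nondecreasing in i, and the integer sum over the first m − a + 1 indices i of (|M i| − a + 1) is at least a, then there exists a rainbow matching of size a. -/

import Mathlib

/-- A matching in a bipartite graph with sides `A` and `B`: a set of edges (pairs in `A × B`)
such that no two edges share a first or a second coordinate. -/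
def IsMatching {A B : Type*} (M : Finset (A × B)) : Prop :=
  (∀ e ∈ M, ∀ f ∈ M, e.1 = f.1 → e = f) ∧ (∀ e ∈ M, ∀ f ∈ M, e.2 = f.2 → e = f)

/-- A family `M` of matchings has a rainbow matching of size `k` if there are `k` edges,
no two sharing a first or second coordinate, and `k` distinct indices such that the `j`-th
edge belongs to the matching with the `j`-th index. -/
def HasRainbowMatching {A B : Type*} {m : ℕ} (M : Fin m → Finset (A × B)) (k : ℕ) : Prop :=
  ∃ (e : Fin k → A × B) (idx : Fin k → Fin m),
    Function.Injective idx ∧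
    Function.Injective (fun j => (e j).1) ∧
    Function.Injective (fun j => (e j).2) ∧
    ∀ j, e j ∈ M (idx j)

namespace RainbowAux

variable {A B : Type*} {m : ℕ}

section
variable [DecidableEq A] [DecidableEq B]

/-- Finset form of a rainbow matching: set of (edge, color) pairs. -/
def RainbowF (M : Fin m → Finset (A × B)) (R : Finset ((A × B) × Fin m)) : Prop :=
  (∀ p ∈ R, p.1 ∈ M p.2) ∧
    ∀ p ∈ R, ∀ q ∈ R, (p.1.1 = q.1.1 ∨ p.1.2 = q.1.2 ∨ p.2 = q.2) → p = q

/-- A valid rotation step: `x = ((f, n), p)` where `p` is a current element, `f ∈ M n` with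
`f` sharing its `A`-vertex with `p`, the color `n` fresh, and `f`'s `B`-vertex free. -/
def Step (M : Fin m → Finset (A × B)) (R : Finset ((A × B) × Fin m))
    (x : ((A × B) × Fin m) × ((A × B) × Fin m)) : Prop :=
  x.2 ∈ R ∧ x.1.1 ∈ M x.1.2 ∧ (∀ z ∈ R, z.2 ≠ x.1.2) ∧ x.1.1.1 = x.2.1.1 ∧
    (∀ z ∈ R, z.1.2 ≠ x.1.1.2)

def rot (R : Finset ((A × B) × Fin m)) (x : ((A × B) × Fin m) × ((A × B) × Fin m)) :
    Finset ((A × B) × Fin m) := insert x.1 (R.erase x.2)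

def ChainP (M : Fin m → Finset (A × B)) :
    Finset ((A × B) × Fin m) → List (((A × B) × Fin m) × ((A × B) × Fin m)) → Prop
  | _, [] => True
  | R, x :: l => Step M R x ∧ ChainP M (rot R x) l

def stateF : Finset ((A × B) × Fin m) → List (((A × B) × Fin m) × ((A × B) × Fin m)) →
    Finset ((A × B) × Fin m)
  | R, [] => R
  | R, x :: l => stateF (rot R x) l

lemma insert_rainbow {M : Fin m → Finset (A × B)} {Q : Finset ((A × B) × Fin m)} {f : A × B}
    {n : Fin m} (hQ : RainbowF M Q) (hf : f ∈ M n)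
    (h1 : ∀ z ∈ Q, z.1.1 ≠ f.1) (h2 : ∀ z ∈ Q, z.1.2 ≠ f.2) (h3 : ∀ z ∈ Q, z.2 ≠ n) :
    RainbowF M (insert (f, n) Q) ∧ (insert (f, n) Q).card = Q.card + 1 := by
  have hnotmem : (f, n) ∉ Q := fun h => h3 _ h rfl
  refine ⟨⟨?_, ?_⟩, Finset.card_insert_of_notMem hnotmem⟩
  · intro p hp
    rcases Finset.mem_insert.mp hp with h | h
    · rw [h]; exact hf
    · exact hQ.1 p h
  · intro p hp q hq hconf
    rcases Finset.mem_insert.mp hp with h | h <;> rcases Finset.mem_insert.mp hq with h' | h'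
    · rw [h, h']
    · exfalso; subst h
      rcases hconf with hc | hc | hc
      · exact h1 q h' hc.symm
      · exact h2 q h' hc.symm
      · exact h3 q h' hc.symm
    · exfalso; subst h'
      rcases hconf with hc | hc | hc
      · exact h1 p h hc
      · exact h2 p h hc
      · exact h3 p h hc
    · exact hQ.2 p h q h' hconf

lemma erase_rainbow {M : Fin m → Finset (A × B)} {R : Finset ((A × B) × Fin m)}
    (hR : RainbowF M R) (p : (A × B) × Fin m) : RainbowF M (R.erase p) :=
  ⟨fun q hq => hR.1 q (Finset.mem_of_mem_erase hq),
   fun q hq q' hq' => hR.2 q (Finset.mem_of_mem_erase hq) q' (Finset.mem_of_mem_erase hq')⟩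

lemma rot_rainbow {M : Fin m → Finset (A × B)} {R : Finset ((A × B) × Fin m)}
    {x : ((A × B) × Fin m) × ((A × B) × Fin m)} (hR : RainbowF M R) (hx : Step M R x) :
    RainbowF M (rot R x) ∧ (rot R x).card = R.card := by
  obtain ⟨hmem, hedge, hcol, hA, hB⟩ := hx
  have h1 : ∀ z ∈ R.erase x.2, z.1.1 ≠ x.1.1.1 := by
    intro z hz heq
    exact (Finset.ne_of_mem_erase hz)
      (hR.2 z (Finset.mem_of_mem_erase hz) x.2 hmem (Or.inl (heq.trans hA)))
  have h2 : ∀ z ∈ R.erase x.2, z.1.2 ≠ x.1.1.2 := fun z hz =>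
    hB z (Finset.mem_of_mem_erase hz)
  have h3 : ∀ z ∈ R.erase x.2, z.2 ≠ x.1.2 := fun z hz => hcol z (Finset.mem_of_mem_erase hz)
  have key := insert_rainbow (erase_rainbow hR x.2) hedge h1 h2 h3
  have hx1 : ((x.1.1, x.1.2) : (A × B) × Fin m) = x.1 := rfl
  rw [hx1] at key
  refine ⟨key.1, ?_⟩
  rw [rot, key.2, Finset.card_erase_of_mem hmem]
  have : 1 ≤ R.card := Finset.card_pos.mpr ⟨x.2, hmem⟩
  omega

lemma chain_state {M : Fin m → Finset (A × B)} :
    ∀ (l : List (((A × B) × Fin m) × ((A × B) × Fin m))) (R), RainbowF M R → ChainP M R l →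
      RainbowF M (stateF R l) ∧ (stateF R l).card = R.card := by
  intro l
  induction l with
  | nil => intro R hR _; exact ⟨hR, rfl⟩
  | cons x l ih =>
    intro R hR hc
    obtain ⟨hs, hc'⟩ := hc
    obtain ⟨ha, hb⟩ := rot_rainbow hR hs
    obtain ⟨g1, g2⟩ := ih (rot R x) ha hc'
    exact ⟨g1, g2.trans hb⟩

lemma mem_state_of {M : Fin m → Finset (A × B)} :
    ∀ (l : List (((A × B) × Fin m) × ((A × B) × Fin m))) (R) (z), ChainP M R l → z ∈ R →
      (∀ x ∈ l, z ≠ x.2) → z ∈ stateF R l := by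
  intro l
  induction l with
  | nil => intro R z _ hz _; exact hz
  | cons x l ih =>
    intro R z hc hz hne
    refine ih (rot R x) z hc.2 ?_ ?_
    · exact Finset.mem_insert_of_mem (Finset.mem_erase.mpr ⟨hne x (List.mem_cons_self), hz⟩)
    · intro y hy; exact hne y (List.mem_cons_of_mem _ hy)

lemma state_mem_cases {M : Fin m → Finset (A × B)} :
    ∀ (l : List (((A × B) × Fin m) × ((A × B) × Fin m))) (R) (z), ChainP M R l →
      z ∈ stateF R l → (z ∈ R ∧ ∀ x ∈ l, z ≠ x.2) ∨ (∃ x ∈ l, z = x.1) := by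
  intro l
  induction l with
  | nil => intro R z _ hz; exact Or.inl ⟨hz, by simp⟩
  | cons x l ih =>
    intro R z hc hz
    rcases ih (rot R x) z hc.2 hz with ⟨hzr, hne⟩ | ⟨y, hy, hzy⟩
    · rcases Finset.mem_insert.mp hzr with h | h
      · exact Or.inr ⟨x, List.mem_cons_self, h⟩
      · refine Or.inl ⟨Finset.mem_of_mem_erase h, ?_⟩
        intro y hy
        rcases List.mem_cons.mp hy with h' | h'
        · rw [h']; exact Finset.ne_of_mem_erase h
        · exact hne y h'
    · exact Or.inr ⟨y, List.mem_cons_of_mem _ hy, hzy⟩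

lemma chain_entry {M : Fin m → Finset (A × B)} :
    ∀ (l : List (((A × B) × Fin m) × ((A × B) × Fin m))) (R), ChainP M R l →
      ∀ x ∈ l, x.1.1.1 = x.2.1.1 := by
  intro l
  induction l with
  | nil => intro R _ x hx; exact absurd hx List.not_mem_nil
  | cons y l ih =>
    intro R hc x hx
    rcases List.mem_cons.mp hx with h | h
    · rw [h]; exact hc.1.2.2.2.1
    · exact ih (rot R y) hc.2 x h

lemma chain_last_free {M : Fin m → Finset (A × B)} :
    ∀ (l : List (((A × B) × Fin m) × ((A × B) × Fin m))) (x) (R), RainbowF M R →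
      ChainP M R (l ++ [x]) → ∀ z ∈ stateF R (l ++ [x]), z.1.2 ≠ x.2.1.2 := by
  intro l
  induction l with
  | nil =>
    intro x R hR hc z hz
    obtain ⟨hs, -⟩ := hc
    rcases Finset.mem_insert.mp hz with h | h
    · rw [h]; exact fun heq => hs.2.2.2.2 x.2 hs.1 heq.symm
    · intro heq
      exact (Finset.ne_of_mem_erase h)
        (hR.2 z (Finset.mem_of_mem_erase h) x.2 hs.1 (Or.inr (Or.inl heq)))
  | cons y l ih =>
    intro x R hR hc
    exact ih x (rot R y) (rot_rainbow hR hc.1).1 hc.2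

lemma chain_append {M : Fin m → Finset (A × B)} :
    ∀ (l : List (((A × B) × Fin m) × ((A × B) × Fin m))) (x) (R), ChainP M R l →
      Step M (stateF R l) x → ChainP M R (l ++ [x]) := by
  intro l
  induction l with
  | nil => intro x R _ hs; exact ⟨hs, trivial⟩
  | cons y l ih => intro x R hc hs; exact ⟨hc.1, ih x (rot R y) hc.2 hs⟩

end
end RainbowAux


namespace RainbowAux

variable {A B : Type*} {m : ℕ}

section
variable [DecidableEq A] [DecidableEq B]

lemma core (M : Fin m → Finset (A × B)) (hM : ∀ i, IsMatching (M i))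
    {R : Finset ((A × B) × Fin m)} {r : ℕ} (hR : RainbowF M R) (hcard : R.card = r)
    (noWin : ∀ Q, RainbowF M Q → Q.card ≠ r + 1) :
    ∀ P : Finset (Fin m), (∀ z ∈ R, z.2 ∉ P) →
      ∃ D : Finset ((A × B) × Fin m), D ⊆ R ∧
        (∀ p ∈ D, ∃ l x, ChainP M R (l ++ [x]) ∧ x.2 = p ∧
          ∀ y ∈ l ++ [x], y.2 ∈ D ∧ y.1.2 ∈ P) ∧
        (∑ i ∈ P, (((M i).card : ℤ) - (r : ℤ))) ≤ (D.card : ℤ) := by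
  classical
  intro P
  induction P using Finset.induction_on with
  | empty =>
    intro _
    exact ⟨∅, Finset.empty_subset _, fun p hp => absurd hp (Finset.notMem_empty p), by simp⟩
  | @insert N P hNP ihP =>
    intro hfresh
    have hfreshN : ∀ z ∈ R, z.2 ≠ N := fun z hz h =>
      hfresh z hz (h ▸ Finset.mem_insert_self N P)
    have hfreshP : ∀ z ∈ R, z.2 ∉ P := fun z hz h =>
      hfresh z hz (Finset.mem_insert_of_mem h)
    obtain ⟨D, hDR, hInv, hsum⟩ := ihP hfreshP
    -- the "useful" edges of M N
    letI : DecidablePred (fun f : A × B => (∀ z ∈ R, z.1.2 ≠ f.2) ∨ ∃ p ∈ D, f.2 = p.1.2) :=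
      fun f => Classical.propDecidable _
    set E := (M N).filter
      (fun f => (∀ z ∈ R, z.1.2 ≠ f.2) ∨ ∃ p ∈ D, f.2 = p.1.2) with hEdef
    have hEsub : E ⊆ M N := Finset.filter_subset _ _
    -- uniqueness of elements of R with a given A-vertex
    have huniq : ∀ q ∈ R, ∀ q' ∈ R, q.1.1 = q'.1.1 → q = q' := fun q hq q' hq' h =>
      hR.2 q hq q' hq' (Or.inl h)
    -- key claim
    have key : ∀ f ∈ E, ∃ q ∈ R, q.1.1 = f.1 ∧ (q ∈ D ∨ ∃ l x, ChainP M R (l ++ [x]) ∧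
        x.2 = q ∧ ∀ y ∈ l ++ [x], (y.2 ∈ D ∨ y.2 = q) ∧ y.1.2 ∈ insert N P) := by
      intro f hf
      obtain ⟨hfM, hcond⟩ := Finset.mem_filter.mp hf
      rcases hcond with ha | ⟨p, hpD, hfp⟩
      · -- f.2 is free with respect to R
        by_cases hA : ∃ q ∈ R, q.1.1 = f.1
        · obtain ⟨q, hqR, hq1⟩ := hA
          refine ⟨q, hqR, hq1, Or.inr ⟨[], ((f, N), q), ⟨⟨hqR, hfM, hfreshN, hq1.symm, ha⟩,
            trivial⟩, rfl, ?_⟩⟩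
          intro y hy
          rcases List.mem_singleton.mp hy with rfl
          exact ⟨Or.inr rfl, Finset.mem_insert_self _ _⟩
        · exfalso
          push_neg at hA
          have hins := insert_rainbow hR hfM hA ha hfreshN
          exact noWin _ hins.1 (by rw [hins.2, hcard])
      · -- f.2 is the B-vertex of some p ∈ D
        obtain ⟨l, x, hchain, hxp, hentries⟩ := hInv p hpD
        have hstate := chain_state (M := M) (l ++ [x]) R hR hchain
        have hfreeB : ∀ z ∈ stateF R (l ++ [x]), z.1.2 ≠ f.2 := by
          intro z hz
          have := chain_last_free l x R hR hchain z hz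
          rw [hxp] at this
          rw [hfp]
          exact this
        have hfreeC : ∀ z ∈ stateF R (l ++ [x]), z.2 ≠ N := by
          intro z hz
          rcases state_mem_cases _ _ _ hchain hz with ⟨hzR, _⟩ | ⟨y, hy, hzy⟩
          · exact hfreshN z hzR
          · rw [hzy]
            intro h
            exact hNP (h ▸ (hentries y hy).2)
        by_cases hA : ∃ w ∈ stateF R (l ++ [x]), w.1.1 = f.1
        · obtain ⟨w, hw, hw1⟩ := hA
          rcases state_mem_cases _ _ _ hchain hw with ⟨hwR, hwne⟩ | ⟨y, hy, hwy⟩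
          · -- extend the chain by ((f, N), w)
            refine ⟨w, hwR, hw1, Or.inr ⟨l ++ [x], ((f, N), w), ?_, rfl, ?_⟩⟩
            · exact chain_append _ _ _ hchain ⟨hw, hfM, hfreeC, hw1.symm, hfreeB⟩
            · intro y hy'
              rcases List.mem_append.mp hy' with h | h
              · exact ⟨Or.inl (hentries y h).1, Finset.mem_insert_of_mem (hentries y h).2⟩
              · rcases List.mem_singleton.mp h with rfl
                exact ⟨Or.inr rfl, Finset.mem_insert_self _ _⟩
          · -- w is a chain edge; its R-partner is already in D
            have h1 : y.2 ∈ D := (hentries y hy).1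
            refine ⟨y.2, hDR h1, ?_, Or.inl h1⟩
            have := chain_entry _ _ hchain y hy
            rw [← this, ← hwy]
            exact hw1
        · exfalso
          push_neg at hA
          have hins := insert_rainbow hstate.1 hfM hA hfreeB hfreeC
          exact noWin _ hins.1 (by rw [hins.2, hstate.2, hcard])
    -- choice function sending each useful edge to its R-partner
    set g : (A × B) → ((A × B) × Fin m) :=
      fun f => if h : ∃ q ∈ R, q.1.1 = f.1 then h.choose else (f, N) with hgdef
    have hgspec : ∀ f ∈ E, g f ∈ R ∧ (g f).1.1 = f.1 ∧ (g f ∈ D ∨ ∃ l x,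
        ChainP M R (l ++ [x]) ∧ x.2 = g f ∧
        ∀ y ∈ l ++ [x], (y.2 ∈ D ∨ y.2 = g f) ∧ y.1.2 ∈ insert N P) := by
      intro f hf
      obtain ⟨q, hqR, hq1, hrest⟩ := key f hf
      have hex : ∃ q ∈ R, q.1.1 = f.1 := ⟨q, hqR, hq1⟩
      have hgf : g f = q := by
        rw [hgdef]
        simp only [dif_pos hex]
        exact huniq _ hex.choose_spec.1 q hqR (hex.choose_spec.2.trans hq1.symm)
      rw [hgf]
      exact ⟨hqR, hq1, hrest⟩
    refine ⟨D ∪ E.image g, ?_, ?_, ?_⟩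
    · intro z hz
      rcases Finset.mem_union.mp hz with h | h
      · exact hDR h
      · obtain ⟨f, hf, rfl⟩ := Finset.mem_image.mp h
        exact (hgspec f hf).1
    · intro p hp
      rcases Finset.mem_union.mp hp with h | h
      · obtain ⟨l, x, hchain, hxp, hent⟩ := hInv p h
        exact ⟨l, x, hchain, hxp, fun y hy => ⟨Finset.mem_union_left _ (hent y hy).1,
          Finset.mem_insert_of_mem (hent y hy).2⟩⟩
      · obtain ⟨f, hf, rfl⟩ := Finset.mem_image.mp h
        rcases (hgspec f hf).2.2 with hD | ⟨l, x, hchain, hxp, hent⟩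
        · obtain ⟨l, x, hchain, hxp, hent⟩ := hInv _ hD
          exact ⟨l, x, hchain, hxp, fun y hy => ⟨Finset.mem_union_left _ (hent y hy).1,
            Finset.mem_insert_of_mem (hent y hy).2⟩⟩
        · refine ⟨l, x, hchain, hxp, fun y hy => ⟨?_, (hent y hy).2⟩⟩
          rcases (hent y hy).1 with h' | h'
          · exact Finset.mem_union_left _ h'
          · rw [h']
            exact Finset.mem_union_right _ (Finset.mem_image_of_mem g hf)
    · -- the counting
      rw [Finset.sum_insert hNP]
      -- g is injective on E
      have hginj : Set.InjOn g E := by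
        intro f hf f' hf' h
        have e1 := (hgspec f hf).2.1
        have e2 := (hgspec f' hf').2.1
        rw [h] at e1
        exact (hM N).1 f (hEsub hf) f' (hEsub hf') (e1.symm.trans e2)
      have hEcard : (E.image g).card = E.card := Finset.card_image_of_injOn hginj
      have hEle : E.card ≤ (D ∪ E.image g).card := by
        rw [← hEcard]
        exact Finset.card_le_card (Finset.subset_union_right)
      -- injection from M N \ E into R \ D
      set h2 : (A × B) → ((A × B) × Fin m) :=
        fun f => if h : ∃ z ∈ R, z.1.2 = f.2 then h.choose else (f, N) with h2def
      have hdiff : ∀ f ∈ M N \ E, h2 f ∈ R \ D ∧ (h2 f).1.2 = f.2 := by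
        intro f hf
        obtain ⟨hfM, hfE⟩ := Finset.mem_sdiff.mp hf
        rw [hEdef] at hfE
        simp only [Finset.mem_filter, hfM, true_and, not_or, not_forall] at hfE
        obtain ⟨h1', h2'⟩ := hfE
        push_neg at h1'
        obtain ⟨z, hzR, hz2⟩ := h1'
        have hex : ∃ z ∈ R, z.1.2 = f.2 := ⟨z, hzR, hz2⟩
        rw [h2def]
        simp only [dif_pos hex]
        refine ⟨Finset.mem_sdiff.mpr ⟨hex.choose_spec.1, ?_⟩, hex.choose_spec.2⟩
        intro hD
        push_neg at h2'
        exact h2' _ hD hex.choose_spec.2.symm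
      have hdcard : (M N \ E).card ≤ (R \ D).card := by
        apply Finset.card_le_card_of_injOn h2
        · intro f hf; exact (hdiff f hf).1
        · intro f hf f' hf' h
          have e1 := (hdiff f hf).2
          have e2 := (hdiff f' hf').2
          rw [h] at e1
          exact (hM N).2 f (Finset.mem_sdiff.mp hf).1 f' (Finset.mem_sdiff.mp hf').1
            (e1.symm.trans e2)
      have hsplit : E.card + (M N \ E).card = (M N).card := by
        rw [Finset.card_sdiff_of_subset hEsub]
        have := Finset.card_le_card hEsub
        omega
      have hRD : (R \ D).card + D.card = R.card := Finset.card_sdiff_add_card_eq_card hDR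
      have hc1 : ((M N \ E).card : ℤ) + (D.card : ℤ) ≤ (r : ℤ) := by
        have : (M N \ E).card + D.card ≤ r := by
          rw [← hcard, ← hRD]
          omega
        exact_mod_cast this
      have hc2 : ((M N).card : ℤ) = (E.card : ℤ) + ((M N \ E).card : ℤ) := by exact_mod_cast hsplit.symm
      have hc3 : ((E.card : ℤ)) ≤ ((D ∪ E.image g).card : ℤ) := by exact_mod_cast hEle
      linarith

end
end RainbowAux
namespace RainbowAux

variable {A B : Type*} {m : ℕ}

lemma hasRainbow_of_finset [DecidableEq A] [DecidableEq B] {M : Fin m → Finset (A × B)} {k : ℕ}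
    (Q : Finset ((A × B) × Fin m)) (hQ : RainbowF M Q) (hc : Q.card = k) :
    HasRainbowMatching M k := by
  let σ : Fin k ≃ {x // x ∈ Q} := (finCongr hc.symm).trans Q.equivFin.symm
  refine ⟨fun j => (σ j).1.1, fun j => (σ j).1.2, ?_, ?_, ?_, fun j => hQ.1 (σ j).1 (σ j).2⟩
  · intro j j' h
    exact σ.injective (Subtype.ext (hQ.2 _ (σ j).2 _ (σ j').2 (Or.inr (Or.inr h))))
  · intro j j' h
    exact σ.injective (Subtype.ext (hQ.2 _ (σ j).2 _ (σ j').2 (Or.inl h)))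
  · intro j j' h
    exact σ.injective (Subtype.ext (hQ.2 _ (σ j).2 _ (σ j').2 (Or.inr (Or.inl h))))

lemma finset_of_hasRainbow [DecidableEq A] [DecidableEq B] {M : Fin m → Finset (A × B)} {k : ℕ}
    (h : HasRainbowMatching M k) : ∃ Q, RainbowF M Q ∧ Q.card = k := by
  obtain ⟨e, idx, h1, h2, h3, h4⟩ := h
  refine ⟨Finset.image (fun j => (e j, idx j)) Finset.univ, ⟨?_, ?_⟩, ?_⟩
  · intro p hp
    obtain ⟨j, -, rfl⟩ := Finset.mem_image.mp hp
    exact h4 j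
  · intro p hp q hq hconf
    obtain ⟨j, -, rfl⟩ := Finset.mem_image.mp hp
    obtain ⟨j', -, rfl⟩ := Finset.mem_image.mp hq
    rcases hconf with h | h | h
    · rw [h2 h]
    · rw [h3 h]
    · rw [h1 h]
  · rw [Finset.card_image_of_injective _ (fun j j' h => h1 (congrArg Prod.snd h)),
      Finset.card_univ, Fintype.card_fin]

lemma le_orderIso {t : ℕ} (f : Fin t → Fin m) (hf : StrictMono f) :
    ∀ k : Fin t, (k : ℕ) ≤ (f k : ℕ) := by
  have H : ∀ n : ℕ, ∀ k : Fin t, (k : ℕ) = n → n ≤ (f k : ℕ) := by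
    intro n
    induction n with
    | zero => intro k _; exact Nat.zero_le _
    | succ j ihj =>
      intro k hk
      have hj : j < t := by omega
      have h1 := ihj ⟨j, hj⟩ rfl
      have h2 : f ⟨j, hj⟩ < f k := hf (by rw [Fin.lt_def]; simp; omega)
      rw [Fin.lt_def] at h2
      omega
  intro k; exact H _ k rfl

lemma sum_le_sum_subset_mono {t : ℕ} (g : Fin m → ℤ) (hg : ∀ i j : Fin m, i ≤ j → g i ≤ g j)
    (P : Finset (Fin m)) (hP : P.card = t) (htm : t ≤ m) :
    ∑ i ∈ Finset.univ.filter (fun i : Fin m => (i : ℕ) < t), g i ≤ ∑ i ∈ P, g i := by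
  classical
  set σ := P.orderIsoOfFin hP with hσ
  have hmono : StrictMono (fun k : Fin t => ((σ k : {x // x ∈ P}) : Fin m)) := by
    intro k k' h
    exact Subtype.coe_lt_coe.mpr (σ.strictMono h)
  have hle := le_orderIso _ hmono
  have h1 : Finset.univ.filter (fun i : Fin m => (i : ℕ) < t) =
      Finset.image (fun k : Fin t => (⟨(k : ℕ), lt_of_lt_of_le k.2 htm⟩ : Fin m))
        Finset.univ := by
    ext i
    simp only [Finset.mem_filter, Finset.mem_univ, true_and, Finset.mem_image]
    constructor
    · intro h
      exact ⟨⟨(i : ℕ), h⟩, rfl⟩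
    · rintro ⟨k, -, rfl⟩
      exact k.2
  have h2 : P = Finset.image (fun k : Fin t => ((σ k : {x // x ∈ P}) : Fin m))
      Finset.univ := by
    ext i
    simp only [Finset.mem_image, Finset.mem_univ, true_and]
    constructor
    · intro h
      exact ⟨σ.symm ⟨i, h⟩, by simp⟩
    · rintro ⟨k, rfl⟩
      exact (σ k).2
  have hinj1 : ∀ (k : Fin t), k ∈ (Finset.univ : Finset (Fin t)) → ∀ (k' : Fin t),
      k' ∈ Finset.univ →
      (⟨(k : ℕ), lt_of_lt_of_le k.2 htm⟩ : Fin m) = (⟨(k' : ℕ), lt_of_lt_of_le k'.2 htm⟩ : Fin m) →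
      k = k' := by
    intro k _ k' _ h
    rw [Fin.mk.injEq] at h
    exact Fin.ext h
  have hinj2 : ∀ (k : Fin t), k ∈ (Finset.univ : Finset (Fin t)) → ∀ (k' : Fin t),
      k' ∈ Finset.univ →
      ((σ k : {x // x ∈ P}) : Fin m) = ((σ k' : {x // x ∈ P}) : Fin m) → k = k' := by
    intro k _ k' _ h
    exact hmono.injective h
  rw [h1, h2, Finset.sum_image hinj1, Finset.sum_image hinj2]
  apply Finset.sum_le_sum
  intro k _
  refine hg _ _ ?_
  rw [Fin.le_def]
  exact hle k

end RainbowAux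


/-- Let `a ≤ m` and let `M_1, …, M_m` be matchings in a bipartite graph with
`|M_1| ≤ … ≤ |M_m|`. If `∑_{i ≤ m - a + 1} (|M_i| - a + 1) ≥ a` (a sum of integers,
over the first `m - a + 1` matchings), then there is a rainbow matching of size `a`. -/
theorem rainbow_of_sum {A B : Type*} {m a : ℕ} (ham : a ≤ m)
    (M : Fin m → Finset (A × B)) (hM : ∀ i, IsMatching (M i))
    (hmono : ∀ i j : Fin m, i ≤ j → (M i).card ≤ (M j).card)
    (hsum : (a : ℤ) ≤ ∑ i ∈ Finset.univ.filter (fun i : Fin m => (i : ℕ) < m - a + 1),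
        (((M i).card : ℤ) - a + 1)) :
    HasRainbowMatching M a := by
  classical
  revert ham hsum
  induction a with
  | zero =>
    intro _ _
    refine ⟨Fin.elim0, Fin.elim0, ?_, ?_, ?_, ?_⟩ <;>
      first
        | (intro j j' h; exact j.elim0)
        | (intro j; exact j.elim0)
  | succ r ih =>
    intro ham hsum
    have hrm : r ≤ m := Nat.le_of_succ_le ham
    have ht : m - (r + 1) + 1 = m - r := by omega
    rw [ht] at hsum
    push_cast at hsum
    -- hsum : (r : ℤ) + 1 ≤ ∑ i ∈ F₁, (c_i - (r + 1) + 1)  (modulo cast normal form)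
    have ihsum : (r : ℤ) ≤ ∑ i ∈ Finset.univ.filter (fun i : Fin m => (i : ℕ) < m - r + 1),
        (((M i).card : ℤ) - r + 1) := by
      rcases Nat.eq_zero_or_pos r with hr0 | hrpos
      · subst hr0
        push_cast
        apply Finset.sum_nonneg
        intro i _
        have : (0 : ℤ) ≤ ((M i).card : ℤ) := Int.natCast_nonneg _
        linarith
      · have htm : m - r < m := by omega
        set it : Fin m := ⟨m - r, htm⟩ with hit
        have hF2 : Finset.univ.filter (fun i : Fin m => (i : ℕ) < m - r + 1) =
            insert it (Finset.univ.filter (fun i : Fin m => (i : ℕ) < m - r)) := by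
          ext i
          simp only [Finset.mem_filter, Finset.mem_univ, true_and, Finset.mem_insert]
          constructor
          · intro h
            rcases Nat.lt_succ_iff_lt_or_eq.mp h with h' | h'
            · exact Or.inr h'
            · exact Or.inl (Fin.ext h')
          · rintro (rfl | h)
            · exact Nat.le_refl _
            · omega
        have hnotmem : it ∉ Finset.univ.filter (fun i : Fin m => (i : ℕ) < m - r) := by
          simp [hit]
        rw [hF2, Finset.sum_insert hnotmem]
        have hex : ∃ i₀, i₀ ∈ Finset.univ.filter (fun i : Fin m => (i : ℕ) < m - r) ∧
            (1 : ℤ) ≤ ((M i₀).card : ℤ) - (r + 1) + 1 := by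
          by_contra hcon
          push_neg at hcon
          have hnp : ∑ i ∈ Finset.univ.filter (fun i : Fin m => (i : ℕ) < m - r),
              (((M i).card : ℤ) - (r + 1) + 1) ≤ 0 := by
            apply Finset.sum_nonpos
            intro i hi
            have := hcon i hi
            omega
          have hr1 : ((r : ℤ) + 1) ≤ 0 := le_trans hsum hnp
          omega
        obtain ⟨i₀, hi₀F, hi₀⟩ := hex
        have hi₀lt : (i₀ : ℕ) < m - r := (Finset.mem_filter.mp hi₀F).2
        have hcit : (M i₀).card ≤ (M it).card := by
          apply hmono
          rw [Fin.le_def]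
          exact Nat.le_of_lt hi₀lt
        have hcit' : ((M i₀).card : ℤ) ≤ ((M it).card : ℤ) := by exact_mod_cast hcit
        have hsplit : ∑ i ∈ Finset.univ.filter (fun i : Fin m => (i : ℕ) < m - r),
            (((M i).card : ℤ) - r + 1) =
            (∑ i ∈ Finset.univ.filter (fun i : Fin m => (i : ℕ) < m - r),
              (((M i).card : ℤ) - (r + 1) + 1)) +
            ((Finset.univ.filter (fun i : Fin m => (i : ℕ) < m - r)).card : ℤ) := by
          calc ∑ i ∈ Finset.univ.filter (fun i : Fin m => (i : ℕ) < m - r),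
              (((M i).card : ℤ) - r + 1)
              = ∑ i ∈ Finset.univ.filter (fun i : Fin m => (i : ℕ) < m - r),
                ((((M i).card : ℤ) - (r + 1) + 1) + 1) :=
                Finset.sum_congr rfl (fun i _ => by ring)
            _ = _ := by
                rw [Finset.sum_add_distrib, Finset.sum_const, nsmul_eq_mul, mul_one]
        have hcardnn : (0 : ℤ) ≤
            ((Finset.univ.filter (fun i : Fin m => (i : ℕ) < m - r)).card : ℤ) :=
          Int.natCast_nonneg _
        linarith
    have hRain : HasRainbowMatching M r := ih hrm ihsum
    by_contra hno
    obtain ⟨R, hRF, hRcard⟩ := RainbowAux.finset_of_hasRainbow hRain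
    have noWin : ∀ Q, RainbowAux.RainbowF M Q → Q.card ≠ r + 1 := fun Q hQ hc =>
      hno (RainbowAux.hasRainbow_of_finset Q hQ hc)
    letI : DecidablePred (fun i : Fin m => ∀ z ∈ R, z.2 ≠ i) :=
      fun i => Classical.propDecidable _
    set P := Finset.univ.filter (fun i : Fin m => ∀ z ∈ R, z.2 ≠ i) with hPdef
    have hfresh : ∀ z ∈ R, z.2 ∉ P := fun z hz h => ((Finset.mem_filter.mp h).2 z hz) rfl
    have hPcard : P.card = m - r := by
      have himg : P = Finset.univ \ R.image Prod.snd := by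
        ext i
        simp only [hPdef, Finset.mem_filter, Finset.mem_univ, true_and, Finset.mem_sdiff,
          Finset.mem_image, not_exists]
        constructor
        · intro h x hx
          exact h x hx.1 hx.2
        · intro h z hz hcon
          exact h z ⟨hz, hcon⟩
      rw [himg, Finset.card_sdiff_of_subset (Finset.subset_univ _), Finset.card_univ, Fintype.card_fin]
      have : (R.image Prod.snd).card = r := by
        rw [Finset.card_image_of_injOn, hRcard]
        intro z hz z' hz' h
        exact hRF.2 z hz z' hz' (Or.inr (Or.inr h))
      rw [this]
    have hPsum : ((r : ℤ) + 1) ≤ ∑ i ∈ P, (((M i).card : ℤ) - r) := by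
      have hmle := RainbowAux.sum_le_sum_subset_mono
        (g := fun i => ((M i).card : ℤ) - ((r : ℤ) + 1) + 1)
        (fun i j hij => by
          have h' : ((M i).card : ℤ) ≤ ((M j).card : ℤ) := by exact_mod_cast hmono i j hij
          linarith)
        P hPcard (Nat.sub_le m r)
      have heq : ∑ i ∈ P, (((M i).card : ℤ) - r) =
          ∑ i ∈ P, (((M i).card : ℤ) - ((r : ℤ) + 1) + 1) :=
        Finset.sum_congr rfl (fun i _ => by ring)
      rw [heq]
      refine le_trans ?_ hmle
      refine le_trans hsum (le_of_eq ?_)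
      exact Finset.sum_congr rfl (fun i _ => by ring)
    obtain ⟨D, hDR, -, hDsum⟩ := RainbowAux.core M hM hRF hRcard noWin P hfresh
    have hDle : (D.card : ℤ) ≤ (r : ℤ) := by
      have := Finset.card_le_card hDR
      rw [hRcard] at this
      exact_mod_cast this
    linarith
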